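/- For every odd prime p, positive integers m, r with p ∤ m, 2j+1 = m p^r, 2j'+1 = p(2j+1), and every integer a with 0 ≤ a and every b with 0 ≤ b < p, the congruence C(m p^{r+1} − 1, a p + b) ≡ (−1)^b C(m p^r − 1, a) (mod p^{r+1}) holds. In particular, taking a = j and b = (p−1)/2 yields C(2j', j') ≡ (−1)^{(p−1)/2} C(2j, j) (mod p^{r+1}). -/
import Mathlib

open Finset

lemma aux_prod_desc (M k : ℕ) :
    ∏ i ∈ Finset.Ioc 0 k, (M - i) = (M - 1).descFactorial k := by
  induction k with
  | zero => simp
  | succ k ih =>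
      rw [Finset.prod_Ioc_succ_top (Nat.zero_le _), ih, Nat.descFactorial_succ, Nat.mul_comm]
      congr 1
      omega

lemma aux_choose_prod (M k : ℕ) :
    k.factorial * (M - 1).choose k = ∏ i ∈ Finset.Ioc 0 k, (M - i) := by
  rw [aux_prod_desc, Nat.descFactorial_eq_factorial_mul_choose]

lemma aux_Ioc_fact (k : ℕ) : (∏ i ∈ Finset.Ioc 0 k, i) = k.factorial := by
  rw [show Finset.Ioc 0 k = Finset.Ico 1 (k+1) from Finset.ext fun x => by
    simp [Finset.mem_Ioc, Finset.mem_Ico]; omega]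
  exact Finset.prod_Ico_id_eq_factorial k

lemma key' (p : ℕ) (hp : p.Prime) (hodd : Odd p) (r N : ℕ) (hN1 : 1 ≤ N)
    (hdvd : (p : ℤ) ^ (r + 1) ∣ (N : ℤ) * p) (a b : ℕ) (hb : b < p) :
    (((N * p - 1).choose (a * p + b) : ℤ) : ZMod (p ^ (r + 1)))
      = (-1) ^ b * ((N - 1).choose a : ℤ) := by
  have hp1 : 1 < p := hp.one_lt
  set k : ℕ := a * p + b with hk
  by_cases hcase : N ≤ a
  · have h1 : (N - 1).choose a = 0 := Nat.choose_eq_zero_of_lt (by omega)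
    have h2 : (N * p - 1).choose k = 0 := by
      apply Nat.choose_eq_zero_of_lt
      have h3 : N * p ≤ a * p := Nat.mul_le_mul_right _ hcase
      have h4 : 1 * 1 ≤ N * p := Nat.mul_le_mul hN1 (by omega)
      omega
    simp [h1, h2]
  push_neg at hcase
  have hkle : k ≤ N * p - 1 := by
    have h1 : a * p + p ≤ N * p := by
      calc a * p + p = (a + 1) * p := by ring
      _ ≤ N * p := Nat.mul_le_mul_right _ (by omega)
    omega
  set Q : ℕ := p ^ (r + 1) with hQ
  set S : Finset ℕ := (Finset.Ioc 0 k).filter (fun i => ¬ p ∣ i) with hS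
  set T : Finset ℕ := (Finset.Ioc 0 k).filter (fun i => p ∣ i) with hT
  have hTim : T = (Finset.Ioc 0 a).image (· * p) := by
    ext i
    simp only [hT, Finset.mem_filter, Finset.mem_Ioc, Finset.mem_image]
    constructor
    · rintro ⟨⟨hi0, hik⟩, t, rfl⟩
      have ht0 : 0 < t := Nat.pos_of_ne_zero (by rintro rfl; simp at hi0)
      have hta : t ≤ a := by
        by_contra h
        push_neg at h
        have h2 : a * p + p ≤ p * t := by
          calc a * p + p = (a + 1) * p := by ring
          _ ≤ t * p := Nat.mul_le_mul_right _ (by omega)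
          _ = p * t := Nat.mul_comm _ _
        omega
      exact ⟨t, ⟨ht0, hta⟩, Nat.mul_comm _ _⟩
    · rintro ⟨t, ⟨ht0, hta⟩, rfl⟩
      have h1 : t * p ≤ a * p := Nat.mul_le_mul_right _ hta
      have h2 : 1 * 1 ≤ t * p := Nat.mul_le_mul ht0 (by omega)
      exact ⟨⟨by omega, by omega⟩, ⟨t, Nat.mul_comm _ _⟩⟩
  have hinj : Set.InjOn (· * p) (Finset.Ioc 0 a) := fun x _ y _ h =>
    Nat.eq_of_mul_eq_mul_right (by omega) h
  have hTcard : T.card = a := by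
    rw [hTim, Finset.card_image_of_injOn hinj, Nat.card_Ioc]
    omega
  have hST : S.card + T.card = k := by
    have h := Finset.card_filter_add_card_filter_not
      (s := Finset.Ioc 0 k) (p := fun i => p ∣ i)
    simp only [Nat.card_Ioc, Nat.sub_zero] at h
    rw [hS, hT]
    omega
  have hScard : S.card = a * (p - 1) + b := by
    obtain ⟨p', rfl⟩ : ∃ p', p = p' + 1 := ⟨p - 1, by omega⟩
    have h1 : a * (p' + 1) = a * p' + a := by ring
    simp only [Nat.add_sub_cancel]
    omega
  -- natural product over S
  set u : ℕ := ∏ i ∈ S, i with hu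
  set V : ℤ := ∏ i ∈ S, ((N : ℤ) * p - i) with hV
  have hfact : (k.factorial : ℤ) = (p : ℤ) ^ a * (a.factorial : ℤ) * (u : ℤ) := by
    have h1 : (k.factorial : ℤ) = ∏ i ∈ Finset.Ioc 0 k, (i : ℤ) := by
      rw [← Nat.cast_prod, aux_Ioc_fact]
    rw [h1, ← Finset.prod_filter_mul_prod_filter_not (Finset.Ioc 0 k) (fun i => p ∣ i)]
    rw [← hT, ← hS]
    have hU' : (∏ i ∈ S, (i : ℤ)) = (u : ℤ) := by rw [hu, Nat.cast_prod]
    rw [hU']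
    congr 1
    rw [hTim, Finset.prod_image hinj]
    have h2 : ∀ t ∈ Finset.Ioc 0 a, ((t * p : ℕ) : ℤ) = (t : ℤ) * p := by
      intro t _; push_cast; ring
    rw [Finset.prod_congr rfl h2, Finset.prod_mul_distrib, Finset.prod_const,
      Nat.card_Ioc, ← Nat.cast_prod, aux_Ioc_fact]
    simp only [Nat.sub_zero]
    ring
  have hchooseNp : ((N * p - 1).choose k : ℤ) * (k.factorial : ℤ)
      = ∏ i ∈ Finset.Ioc 0 k, ((N : ℤ) * p - i) := by
    have h0 := aux_choose_prod (N * p) k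
    have h1 : ((∏ i ∈ Finset.Ioc 0 k, (N * p - i) : ℕ) : ℤ)
        = ∏ i ∈ Finset.Ioc 0 k, ((N : ℤ) * p - i) := by
      rw [Nat.cast_prod]
      apply Finset.prod_congr rfl
      intro i hi
      simp only [Finset.mem_Ioc] at hi
      have h2 : i ≤ N * p := by omega
      push_cast [Nat.cast_sub h2]
      ring
    rw [← h1, ← h0]
    push_cast
    ring
  have hchooseN : ((N - 1).choose a : ℤ) * (a.factorial : ℤ)
      = ∏ t ∈ Finset.Ioc 0 a, ((N : ℤ) - t) := by
    have h0 := aux_choose_prod N a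
    have h1 : ((∏ t ∈ Finset.Ioc 0 a, (N - t) : ℕ) : ℤ)
        = ∏ t ∈ Finset.Ioc 0 a, ((N : ℤ) - t) := by
      rw [Nat.cast_prod]
      apply Finset.prod_congr rfl
      intro i hi
      simp only [Finset.mem_Ioc] at hi
      have h2 : i ≤ N := by omega
      push_cast [Nat.cast_sub h2]
      ring
    rw [← h1, ← h0]
    push_cast
    ring
  -- exact identity over ℤ
  have hmain : ((N * p - 1).choose k : ℤ) * (u : ℤ) = ((N - 1).choose a : ℤ) * V := by
    have hc : ((p : ℤ) ^ a * (a.factorial : ℤ)) ≠ 0 := by positivity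
    apply mul_right_cancel₀ hc
    calc ((N * p - 1).choose k : ℤ) * (u : ℤ) * ((p : ℤ) ^ a * (a.factorial : ℤ))
        = ((N * p - 1).choose k : ℤ) * ((p : ℤ) ^ a * (a.factorial : ℤ) * (u : ℤ)) := by ring
      _ = ((N * p - 1).choose k : ℤ) * (k.factorial : ℤ) := by rw [← hfact]
      _ = ∏ i ∈ Finset.Ioc 0 k, ((N : ℤ) * p - i) := hchooseNp
      _ = (∏ i ∈ T, ((N : ℤ) * p - i)) * ∏ i ∈ S, ((N : ℤ) * p - i) := by
          rw [hS, hT, Finset.prod_filter_mul_prod_filter_not]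
      _ = ((N - 1).choose a : ℤ) * V * ((p : ℤ) ^ a * (a.factorial : ℤ)) := by
          rw [hTim, Finset.prod_image hinj]
          have he : ∀ t ∈ Finset.Ioc 0 a, ((N : ℤ) * p - (t * p : ℕ)) = ((N : ℤ) - t) * p := by
            intro t _; push_cast; ring
          rw [Finset.prod_congr rfl he, Finset.prod_mul_distrib, Finset.prod_const,
            Nat.card_Ioc, ← hchooseN, ← hV]
          simp only [Nat.sub_zero]
          ring
  -- pass to ZMod Q
  have hNp0 : ((N : ZMod Q) * p) = 0 := by
    obtain ⟨c, hc⟩ := hdvd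
    calc ((N : ZMod Q) * p) = (((N : ℤ) * p : ℤ) : ZMod Q) := by push_cast; ring
      _ = (((p : ℤ) ^ (r + 1) * c : ℤ) : ZMod Q) := by rw [hc]
      _ = ((Q : ℤ) : ZMod Q) * c := by push_cast [hQ]; ring
      _ = 0 := by simp
  have hVU : ((V : ℤ) : ZMod Q) = (-1) ^ b * ((u : ℕ) : ZMod Q) := by
    have h1 : ((V : ℤ) : ZMod Q) = ∏ i ∈ S, ((N : ZMod Q) * p - (i : ℕ)) := by
      rw [hV]; push_cast; rfl
    have h2 : ∀ i ∈ S, ((N : ZMod Q) * p - (i : ℕ)) = (-1) * ((i : ℕ) : ZMod Q) := by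
      intro i _
      rw [hNp0]; ring
    rw [h1, Finset.prod_congr rfl h2, Finset.prod_mul_distrib, Finset.prod_const,
      hScard]
    have hpar : ((-1 : ZMod Q)) ^ (a * (p - 1) + b) = (-1) ^ b := by
      rw [pow_add, pow_mul']
      have : Even (p - 1) := Nat.Odd.sub_odd hodd odd_one
      rw [this.neg_one_pow, one_pow, one_mul]
    rw [hpar, hu, Nat.cast_prod]
  have huunit : IsUnit ((u : ℕ) : ZMod Q) := by
    rw [ZMod.isUnit_iff_coprime]
    apply Nat.Coprime.pow_right
    apply Nat.Coprime.prod_left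
    intro i hi
    rw [hS, Finset.mem_filter] at hi
    exact ((hp.coprime_iff_not_dvd).mpr hi.2).symm
  -- cancel
  obtain ⟨w, hw⟩ := isUnit_iff_exists_inv.mp huunit
  have hz := congrArg (fun x : ℤ => (x : ZMod Q)) hmain
  simp only [Int.cast_mul, Int.cast_natCast] at hz
  rw [hVU] at hz
  have : (((N * p - 1).choose k : ℤ) : ZMod Q)
      = ((-1) ^ b * ((N - 1).choose a : ℤ) : ZMod Q) := by
    calc (((N * p - 1).choose k : ℤ) : ZMod Q)
        = (((N * p - 1).choose k : ℤ) : ZMod Q) * (((u : ℕ) : ZMod Q) * w) := by rw [hw, mul_one]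
      _ = ((((N * p - 1).choose k : ℕ) : ZMod Q) * ((u : ℕ) : ZMod Q)) * w := by push_cast; ring
      _ = (((N - 1).choose a : ZMod Q) * ((-1) ^ b * ((u : ℕ) : ZMod Q))) * w := by
          rw [← hz]
      _ = ((-1) ^ b * ((N - 1).choose a : ℤ) : ZMod Q) * (((u : ℕ) : ZMod Q) * w) := by
          push_cast
          ring
      _ = _ := by rw [hw, mul_one]
  rw [this]

/-- For an odd prime `p`, `m` positive with `p ∤ m`, `2j+1 = m p^r` and `2j'+1 = p(2j+1)`:
`C(m p^{r+1} − 1, ap + b) ≡ (−1)^b C(m p^r − 1, a) (mod p^{r+1})` for all `a ≥ 0`,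
`0 ≤ b < p`; in particular `C(2j', j') ≡ (−1)^{(p−1)/2} C(2j, j) (mod p^{r+1})`. -/
theorem stmt13 (p : ℕ) (hp : p.Prime) (hodd : Odd p) (m r j j' : ℕ)
    (hm : 1 ≤ m) (hpm : ¬ p ∣ m) (hj : 2 * j + 1 = m * p ^ r)
    (hj' : 2 * j' + 1 = p * (2 * j + 1)) :
    (∀ a b : ℕ, b < p →
      ((m * p ^ (r + 1) - 1).choose (a * p + b) : ℤ)
        ≡ (-1) ^ b * ((m * p ^ r - 1).choose a : ℤ) [ZMOD (p : ℤ) ^ (r + 1)]) ∧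
    ((2 * j').choose j' : ℤ) ≡ (-1) ^ ((p - 1) / 2) * ((2 * j).choose j : ℤ)
      [ZMOD (p : ℤ) ^ (r + 1)] := by
  have hp1 : 1 < p := hp.one_lt
  set N : ℕ := m * p ^ r with hN
  have hN1 : 1 ≤ N := by
    have : 1 ≤ p ^ r := Nat.one_le_pow _ _ (by omega)
    calc 1 = 1 * 1 := by ring
    _ ≤ m * p ^ r := Nat.mul_le_mul hm this
  have hNp : m * p ^ (r + 1) = N * p := by rw [hN, pow_succ]; ring
  have hdvd : (p : ℤ) ^ (r + 1) ∣ (N : ℤ) * p := ⟨m, by push_cast [hN, pow_succ]; ring⟩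
  have hmod : ((p ^ (r + 1) : ℕ) : ℤ) = (p : ℤ) ^ (r + 1) := by push_cast; ring
  have part1 : ∀ a b : ℕ, b < p →
      ((m * p ^ (r + 1) - 1).choose (a * p + b) : ℤ)
        ≡ (-1) ^ b * ((m * p ^ r - 1).choose a : ℤ) [ZMOD (p : ℤ) ^ (r + 1)] := by
    intro a b hb
    rw [← hmod, ← ZMod.intCast_eq_intCast_iff]
    rw [hNp, ← hN]
    exact_mod_cast key' p hp hodd r N hN1 hdvd a b hb
  refine ⟨part1, ?_⟩
  obtain ⟨s, hs⟩ := hodd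
  have hs2 : s = (p - 1) / 2 := by omega
  have h2j : 2 * j = N - 1 := by omega
  have h2j' : 2 * j' = N * p - 1 := by
    have : 2 * j' + 1 = N * p := by rw [hj', hj, hN]; ring
    omega
  have hj'eq : j' = j * p + s := by
    have h1 : 2 * j' + 1 = p * (2 * j + 1) := hj'
    have h2 : p * (2 * j + 1) = 2 * (j * p) + p := by ring
    omega
  have key2 := part1 j s (by omega)
  rw [hNp] at key2
  rw [h2j', h2j, hj'eq, ← hs2]
  exact key2
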